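/- arXiv:2203.11142 — 3 statements merged into one kernel-verified Lean document; each statement's English description precedes it below -/
import Mathlib

section
/- Let g ∈ ℚ⟦t⟧ be the formal power series with coefficient 0 at t⁰, coefficient 1 at t¹, and coefficient (∏_{k=2}^{n}(3k−4))/n! at tⁿ for every n ≥ 2 (i.e. g = t + ∑_{n≥2} (2·5···(3n−4)/n!) tⁿ). Then g − g² + (1/3)·g³ = t, i.e. g is the compositional inverse of the polynomial power series t − t² + (1/3)t³. -/
open PowerSeries

/-- Let `g ∈ ℚ⟦t⟧` have coefficient `0` at `t⁰`, `1` at `t¹`, and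
`(∏_{k=2}^{n} (3k-4))/n!` at `tⁿ` for `n ≥ 2`.  Then `g - g² + (1/3)·g³ = t`. -/
theorem stmt_0 (g : PowerSeries ℚ)
    (hg0 : PowerSeries.coeff (R := ℚ) 0 g = 0)
    (hg1 : PowerSeries.coeff (R := ℚ) 1 g = 1)
    (hg : ∀ n : ℕ, 2 ≤ n →
      PowerSeries.coeff (R := ℚ) n g =
        (∏ k ∈ Finset.Icc 2 n, (3 * (k : ℚ) - 4)) / (Nat.factorial n : ℚ)) :
    g - g ^ 2 + PowerSeries.C (R := ℚ) (1 / 3) * g ^ 3 = PowerSeries.X := by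
  have key : ∀ (f : ℚ⟦X⟧) (n : ℕ), coeff (R := ℚ) (n + 1) ((1 - 3 * X) * f)
      = coeff (R := ℚ) (n + 1) f - 3 * coeff (R := ℚ) n f := by
    intro f n
    rw [sub_mul, one_mul, map_sub,
      show (3 : ℚ⟦X⟧) * X * f = C (R := ℚ) 3 * (X * f) by rw [← map_ofNat (C (R := ℚ)) 3]; ring,
      coeff_C_mul, coeff_succ_X_mul]
  have key0 : ∀ f : ℚ⟦X⟧, coeff (R := ℚ) 0 ((1 - 3 * X) * f) = coeff (R := ℚ) 0 f := by
    intro f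
    rw [sub_mul, one_mul, map_sub,
      show (3 : ℚ⟦X⟧) * X * f = C (R := ℚ) 3 * (X * f) by rw [← map_ofNat (C (R := ℚ)) 3]; ring,
      coeff_C_mul, coeff_zero_X_mul, mul_zero, sub_zero]
  -- recurrence: (n+2) * a_{n+2} = (3(n+1)-1) * a_{n+1}
  have hrec : ∀ n : ℕ, (coeff (R := ℚ) (n + 2) g) * (n + 2) = (3 * (n + 1) - 1) * coeff (R := ℚ) (n + 1) g := by
    intro n
    rcases n with _ | m
    · have h2 := hg 2 (by norm_num)
      simp at h2
      norm_num [h2, hg1]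
    · have ha := hg (m + 2) (by omega)
      have hb := hg (m + 3) (by omega)
      rw [show m + 1 + 2 = m + 3 from rfl, show m + 1 + 1 = m + 2 from rfl] at *
      rw [ha, hb]
      rw [show m + 3 = (m + 2) + 1 from rfl, Finset.prod_Icc_succ_top (by omega),
        Nat.factorial_succ]
      have hf : ((m + 2).factorial : ℚ) ≠ 0 := by positivity
      push_cast
      field_simp
      ring
  -- ODE: (1 - 3X) * g' = 1 - g
  have h1 : (1 - 3 * X) * (derivative ℚ g) = 1 - g := by
    ext n
    rcases n with _ | n
    · simp only [key0, coeff_derivative, map_sub, hg1, ← coeff_zero_eq_constantCoeff_apply, hg0]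
      simp
    · rw [key, coeff_derivative, coeff_derivative, map_sub, coeff_one,
        if_neg (Nat.succ_ne_zero n)]
      have := hrec n
      push_cast at this ⊢
      linarith [this]
  -- derivative of (1-g)^3
  have h2 : (1 - 3 * X) * (derivative ℚ ((1 - g) ^ 3)) = -3 * (1 - g) ^ 3 := by
    have hd : derivative ℚ ((1 - g) ^ 3) = 3 * (1 - g) ^ 2 * (-(derivative ℚ g)) := by
      have := Derivation.leibniz_pow (derivative ℚ) (1 - g) 3
      rw [this]
      simp [smul_eq_mul]
      ring
    rw [hd]
    have : (1 - 3 * X) * (3 * (1 - g) ^ 2 * -(derivative ℚ g))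
        = (3 * (1 - g) ^ 2) * -((1 - 3 * X) * derivative ℚ g) := by ring
    rw [this, h1]
    ring
  set w := (1 - g) ^ 3 with hw
  have hw0 : coeff (R := ℚ) 0 w = 1 := by
    rw [hw, coeff_zero_eq_constantCoeff, map_pow, map_sub, map_one,
      ← coeff_zero_eq_constantCoeff_apply, hg0]
    norm_num
  have hwrec : ∀ n : ℕ, (coeff (R := ℚ) (n + 2) w) * (n + 2) = (3 * (n + 1) - 3) * coeff (R := ℚ) (n + 1) w := by
    intro n
    have h := congrArg (coeff (R := ℚ) (n + 1)) h2
    rw [key, coeff_derivative, coeff_derivative,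
      show (-3 : ℚ⟦X⟧) * w = C (R := ℚ) (-3) * w by rw [map_neg, map_ofNat],
      coeff_C_mul] at h
    push_cast at h ⊢
    linear_combination h
  have hw1 : coeff (R := ℚ) 1 w = -3 := by
    have h := congrArg (coeff (R := ℚ) 0) h2
    rw [key0, coeff_derivative,
      show (-3 : ℚ⟦X⟧) * w = C (R := ℚ) (-3) * w by rw [map_neg, map_ofNat],
      coeff_C_mul, hw0] at h
    push_cast at h
    linarith
  have hw2 : coeff (R := ℚ) 2 w = 0 := by
    have := hwrec 0
    push_cast at this
    rw [hw1] at this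
    linarith
  have hwn : ∀ n : ℕ, 2 ≤ n → coeff (R := ℚ) n w = 0 := by
    intro n hn
    induction n with
    | zero => omega
    | succ m ih =>
      rcases m with _ | _ | k
      · omega
      · exact hw2
      · have h := hwrec (k + 1)
        rw [ih (by omega)] at h
        push_cast at h
        have hk : ((k : ℚ) + 1 + 2) ≠ 0 := by positivity
        have : coeff (R := ℚ) (k + 1 + 2) w * ((k : ℚ) + 1 + 2) = 0 := by linarith
        exact (mul_eq_zero.mp this).resolve_right hk
  have h4 : w = 1 - 3 * X := by
    ext n
    rcases n with _ | n
    · rw [map_sub, hw0, show (3 : ℚ⟦X⟧) * X = C (R := ℚ) 3 * X by rw [map_ofNat], coeff_C_mul]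
      simp
    · rcases n with _ | n
      · rw [map_sub, hw1, show (3 : ℚ⟦X⟧) * X = C (R := ℚ) 3 * X by rw [map_ofNat], coeff_C_mul]
        simp
      · rw [hwn (n + 2) (by omega), map_sub,
          show (3 : ℚ⟦X⟧) * X = C (R := ℚ) 3 * X by rw [map_ofNat], coeff_C_mul]
        simp [coeff_X, coeff_one]
  have hC : (C (R := ℚ) (1 / 3)) * 3 = 1 := by
    rw [show (3 : ℚ⟦X⟧) = C (R := ℚ) 3 by rw [map_ofNat], ← map_mul]
    norm_num
  rw [hw] at h4
  linear_combination (-(C (R := ℚ) (1 / 3))) * h4 - (g - g ^ 2 - X) * hC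
end

section
/- Let A be a nonunital associative ring equipped with a compatible ℚ-module structure (so multiplication is ℚ-bilinear), and write [a,b] = ab − ba. Suppose that for all a, b, c ∈ A: (i) [a,b]c + [c,b]a = 0, (ii) a[c,b] + c[a,b] = 0, and (iii) abc − acb + bca − bac + cab − cba = 0. Then for all a, b, c ∈ A all six permuted products coincide: abc = acb = bac = bca = cab = cba. -/
/-- in a nonunital associative ring with a compatible `ℚ`-module
structure, if `[a,b]c + [c,b]a = 0`, `a[c,b] + c[a,b] = 0` and
`abc - acb + bca - bac + cab - cba = 0` for all `a, b, c`, then all six permuted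
triple products coincide. -/
theorem stmt_18 (A : Type*) [NonUnitalRing A] [Module ℚ A]
    [IsScalarTower ℚ A A] [SMulCommClass ℚ A A]
    (h1 : ∀ a b c : A, (a * b - b * a) * c + (c * b - b * c) * a = 0)
    (h2 : ∀ a b c : A, a * (c * b - b * c) + c * (a * b - b * a) = 0)
    (h3 : ∀ a b c : A,
      a * b * c - a * c * b + b * c * a - b * a * c + c * a * b - c * b * a = 0) :
    ∀ a b c : A,
      a * b * c = a * c * b ∧ a * b * c = b * a * c ∧ a * b * c = b * c * a ∧
      a * b * c = c * a * b ∧ a * b * c = c * b * a := by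
  -- In a `ℚ`-module, `x + x + x = 0` implies `x = 0`.
  have three : ∀ x : A, x + x + x = 0 → x = 0 := by
    intro x hx
    have h3' : (3 : ℚ) • x = 0 := by
      rw [show (3 : ℚ) = 1 + 1 + 1 by norm_num, add_smul, add_smul, one_smul, hx]
    have := congrArg (fun y => (3 : ℚ)⁻¹ • y) h3'
    simpa [smul_smul] using this
  -- swapping the last two factors
  have hg : ∀ a b c : A, a * b * c = a * c * b := by
    intro a b c
    have e1 := h2 a b c
    have e2 := h2 c a b
    have e3 := h3 a b c
    have key : a * b * c - a * c * b + (a * b * c - a * c * b) +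
        (a * b * c - a * c * b) =
        (a * b * c - a * c * b + b * c * a - b * a * c + c * a * b - c * b * a)
          - ((a * (c * b - b * c) + c * (a * b - b * a)) +
             (a * (c * b - b * c) + c * (a * b - b * a)))
          - (c * (b * a - a * b) + b * (c * a - a * c)) := by
      noncomm_ring
    rw [e1, e2, e3] at key
    simp only [sub_zero, add_zero, zero_add] at key
    exact sub_eq_zero.mp (three _ key)
  -- swapping the first two factors
  have hf : ∀ a b c : A, a * b * c = b * a * c := by
    intro a b c
    have e1 := h1 a b c
    have e2 := h1 b c a
    have e3 := h3 a b c
    have key : a * b * c - b * a * c + (a * b * c - b * a * c) +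
        (a * b * c - b * a * c) =
        (a * b * c - a * c * b + b * c * a - b * a * c + c * a * b - c * b * a)
          + (((a * b - b * a) * c + (c * b - b * c) * a) +
             ((a * b - b * a) * c + (c * b - b * c) * a))
          + ((b * c - c * b) * a + (a * c - c * a) * b) := by
      noncomm_ring
    rw [e1, e2, e3] at key
    simp only [sub_zero, add_zero, zero_add] at key
    exact sub_eq_zero.mp (three _ key)
  intro a b c
  refine ⟨hg a b c, hf a b c, ?_, ?_, ?_⟩
  · rw [hf a b c, hg b a c]
  · rw [hg a b c, hf a c b]
  · rw [hg a b c, hf a c b, hg c a b]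
end

section
/- Let A be a nonunital associative ring equipped with a compatible ℚ-module structure (so multiplication is ℚ-bilinear), and write [a,b] = ab − ba. Suppose that for all a, b, c ∈ A: (i) [a,b]c + [c,b]a = 0, (ii) a[c,b] + c[a,b] = 0, and (iii) abc + acb + bca + bac + cab + cba = 0. Then for all a, b, c ∈ A the permuted products satisfy the sign rule: acb = −abc, bac = −abc, bca = abc, cab = abc, and cba = −abc. -/
private lemma triple_zero {A : Type*} [AddCommGroup A] [Module ℚ A] {x : A}
    (h : x + x + x = 0) : x = 0 := by
  have h3 : (3 : ℚ) • x = 0 := by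
    rw [show ((3 : ℚ)) • x = (3 : ℕ) • x from Nat.cast_smul_eq_nsmul ℚ 3 x, ← h]
    abel
  have := congrArg (fun y => ((3 : ℚ))⁻¹ • y) h3
  simpa [smul_smul] using this

/-- in a nonunital associative ring with a compatible `ℚ`-module
structure, if `[a,b]c + [c,b]a = 0`, `a[c,b] + c[a,b] = 0` and
`abc + acb + bca + bac + cab + cba = 0` for all `a, b, c`, then the permuted triple
products satisfy the sign rule `acb = -abc`, `bac = -abc`, `bca = abc`, `cab = abc`,
`cba = -abc`. -/
theorem stmt_19 (A : Type*) [NonUnitalRing A] [Module ℚ A]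
    [IsScalarTower ℚ A A] [SMulCommClass ℚ A A]
    (h1 : ∀ a b c : A, (a * b - b * a) * c + (c * b - b * c) * a = 0)
    (h2 : ∀ a b c : A, a * (c * b - b * c) + c * (a * b - b * a) = 0)
    (h3 : ∀ a b c : A,
      a * b * c + a * c * b + b * c * a + b * a * c + c * a * b + c * b * a = 0) :
    ∀ a b c : A,
      a * c * b = -(a * b * c) ∧ b * a * c = -(a * b * c) ∧ b * c * a = a * b * c ∧
      c * a * b = a * b * c ∧ c * b * a = -(a * b * c) := by
  intro a b c
  refine ⟨?_, ?_, ?_, ?_, ?_⟩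
  · -- acb = -abc : 3(acb+abc) = 2 e1(abc) + e2(abc) + 2 e1(acb) + e2(acb) + e3
    have H : (a*c*b + a*b*c) + (a*c*b + a*b*c) + (a*c*b + a*b*c)
        = ((a*b - b*a)*c + (c*b - b*c)*a) + ((a*b - b*a)*c + (c*b - b*c)*a)
        + (a*(c*b - b*c) + c*(a*b - b*a))
        + ((a*c - c*a)*b + (b*c - c*b)*a) + ((a*c - c*a)*b + (b*c - c*b)*a)
        + (a*(b*c - c*b) + b*(a*c - c*a))
        + (a*b*c + a*c*b + b*c*a + b*a*c + c*a*b + c*b*a) := by noncomm_ring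
    rw [h1 a b c, h2 a b c, h1 a c b, h2 a c b, h3 a b c] at H
    simp only [add_zero, zero_add] at H
    exact eq_neg_of_add_eq_zero_left (triple_zero H)
  · -- bac = -abc : 3(bac+abc) = e1(acb) + 2 e2(acb) + e3
    have H : (b*a*c + a*b*c) + (b*a*c + a*b*c) + (b*a*c + a*b*c)
        = ((a*c - c*a)*b + (b*c - c*b)*a)
        + (a*(b*c - c*b) + b*(a*c - c*a)) + (a*(b*c - c*b) + b*(a*c - c*a))
        + (a*b*c + a*c*b + b*c*a + b*a*c + c*a*b + c*b*a) := by noncomm_ring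
    rw [h1 a c b, h2 a c b, h3 a b c] at H
    simp only [add_zero, zero_add] at H
    exact eq_neg_of_add_eq_zero_left (triple_zero H)
  · -- bca = abc : 3(abc - bca) = 2 e1(abc) + e2(abc) + e1(acb) + 2 e2(acb)
    have H : (a*b*c - b*c*a) + (a*b*c - b*c*a) + (a*b*c - b*c*a)
        = ((a*b - b*a)*c + (c*b - b*c)*a) + ((a*b - b*a)*c + (c*b - b*c)*a)
        + (a*(c*b - b*c) + c*(a*b - b*a))
        + ((a*c - c*a)*b + (b*c - c*b)*a)
        + (a*(b*c - c*b) + b*(a*c - c*a)) + (a*(b*c - c*b) + b*(a*c - c*a)) := by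
      noncomm_ring
    rw [h1 a b c, h2 a b c, h1 a c b, h2 a c b] at H
    simp only [add_zero, zero_add] at H
    exact (sub_eq_zero.mp (triple_zero H)).symm
  · -- cab = abc : 3(abc - cab) = e1(abc) - e2(abc) + 2 e1(acb) + e2(acb)
    have H : (a*b*c - c*a*b) + (a*b*c - c*a*b) + (a*b*c - c*a*b)
        = ((a*b - b*a)*c + (c*b - b*c)*a)
        - (a*(c*b - b*c) + c*(a*b - b*a))
        + ((a*c - c*a)*b + (b*c - c*b)*a) + ((a*c - c*a)*b + (b*c - c*b)*a)
        + (a*(b*c - c*b) + b*(a*c - c*a)) := by noncomm_ring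
    rw [h1 a b c, h2 a b c, h1 a c b, h2 a c b] at H
    simp only [add_zero, zero_add, sub_zero, zero_sub, neg_zero] at H
    exact (sub_eq_zero.mp (triple_zero H)).symm
  · -- cba = -abc : 3(cba+abc) = e1(abc) - e2(abc) + e3
    have H : (c*b*a + a*b*c) + (c*b*a + a*b*c) + (c*b*a + a*b*c)
        = ((a*b - b*a)*c + (c*b - b*c)*a)
        - (a*(c*b - b*c) + c*(a*b - b*a))
        + (a*b*c + a*c*b + b*c*a + b*a*c + c*a*b + c*b*a) := by noncomm_ring
    rw [h1 a b c, h2 a b c, h3 a b c] at H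
    simp only [add_zero, zero_add, sub_zero, zero_sub, neg_zero] at H
    exact eq_neg_of_add_eq_zero_left (triple_zero H)
end
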